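/- Let G be the generalized dihedral group on a finite abelian group A with involution t, and let S ⊆ G be an inverse-closed generating set with |S| = 4 and |S ∩ At| = 1. Then Cay(G,S) does not admit a perfect code. -/

import Mathlib

def cayGraph {G : Type*} [Group G] (S : Set G) : SimpleGraph G :=
  SimpleGraph.fromRel (fun x y => y * x⁻¹ ∈ S)

def IsPerfectCode {V : Type*} (Γ : SimpleGraph V) (D : Set V) : Prop :=
  ∀ v : V, ∃! d, d ∈ D ∧ (d = v ∨ Γ.Adj d v)

open Classical in
noncomputable def pcInd {G : Type*} (D : Set G) (x : G) : ℕ := if x ∈ D then 1 else 0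

lemma pcInd_pos {G : Type*} {D : Set G} {x : G} (h : x ∈ D) : pcInd D x = 1 := by
  simp [pcInd, h]

lemma pcInd_neg {G : Type*} {D : Set G} {x : G} (h : x ∉ D) : pcInd D x = 0 := by
  simp [pcInd, h]

lemma pc_five_helper {G : Type*} (D : Set G) (v1 v2 v3 v4 v5 : G)
    (h12 : v1 ≠ v2) (h13 : v1 ≠ v3) (h14 : v1 ≠ v4) (h15 : v1 ≠ v5)
    (h23 : v2 ≠ v3) (h24 : v2 ≠ v4) (h25 : v2 ≠ v5)
    (h34 : v3 ≠ v4) (h35 : v3 ≠ v5) (h45 : v4 ≠ v5)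
    (h : ∃! d, d ∈ D ∧ d ∈ ({v1, v2, v3, v4, v5} : Set G)) :
    pcInd D v1 + pcInd D v2 + pcInd D v3 + pcInd D v4 + pcInd D v5 = 1 := by
  obtain ⟨d, ⟨hdD, hdm⟩, hu⟩ := h
  have key : ∀ x, x ∈ D → x ∈ ({v1, v2, v3, v4, v5} : Set G) → x = d :=
    fun x hx hm => hu x ⟨hx, hm⟩
  simp only [Set.mem_insert_iff, Set.mem_singleton_iff] at hdm
  rcases hdm with rfl | rfl | rfl | rfl | rfl
  · have e1 := pcInd_pos hdD
    have e2 := pcInd_neg (fun h => h12 (key v2 h (by simp)).symm)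
    have e3 := pcInd_neg (fun h => h13 (key v3 h (by simp)).symm)
    have e4 := pcInd_neg (fun h => h14 (key v4 h (by simp)).symm)
    have e5 := pcInd_neg (fun h => h15 (key v5 h (by simp)).symm)
    omega
  · have e1 := pcInd_neg (fun h => h12 (key v1 h (by simp)))
    have e2 := pcInd_pos hdD
    have e3 := pcInd_neg (fun h => h23 (key v3 h (by simp)).symm)
    have e4 := pcInd_neg (fun h => h24 (key v4 h (by simp)).symm)
    have e5 := pcInd_neg (fun h => h25 (key v5 h (by simp)).symm)
    omega
  · have e1 := pcInd_neg (fun h => h13 (key v1 h (by simp)))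
    have e2 := pcInd_neg (fun h => h23 (key v2 h (by simp)))
    have e3 := pcInd_pos hdD
    have e4 := pcInd_neg (fun h => h34 (key v4 h (by simp)).symm)
    have e5 := pcInd_neg (fun h => h35 (key v5 h (by simp)).symm)
    omega
  · have e1 := pcInd_neg (fun h => h14 (key v1 h (by simp)))
    have e2 := pcInd_neg (fun h => h24 (key v2 h (by simp)))
    have e3 := pcInd_neg (fun h => h34 (key v3 h (by simp)))
    have e4 := pcInd_pos hdD
    have e5 := pcInd_neg (fun h => h45 (key v5 h (by simp)).symm)
    omega
  · have e1 := pcInd_neg (fun h => h15 (key v1 h (by simp)))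
    have e2 := pcInd_neg (fun h => h25 (key v2 h (by simp)))
    have e3 := pcInd_neg (fun h => h35 (key v3 h (by simp)))
    have e4 := pcInd_neg (fun h => h45 (key v4 h (by simp)))
    have e5 := pcInd_pos hdD
    omega

lemma pc_aux {G : Type*} [Group G] (S D : Set G)
    (hD : IsPerfectCode (cayGraph S) D)
    (hSinv : ∀ s ∈ S, s⁻¹ ∈ S) (hS1 : (1 : G) ∉ S)
    (w b y z : G)
    (hSchar : ∀ x : G, x ∈ S ↔ (x = w ∨ x = b ∨ x = y ∨ x = z))
    (hby : b ≠ y) (hbz : b ≠ z) (hyz : y ≠ z)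
    (hbw : b ≠ w) (hyw : y ≠ w) (hzw : z ≠ w)
    (hww : w * w = 1) (hbb : b * b = 1)
    (hyb : y * b = b * y) (hzb : z * b = b * z) (hwb : w * b = b * w)
    (hywc : y * w = w * y⁻¹) (hzwc : z * w = w * z⁻¹)
    (hQ : (y⁻¹ = y ∧ z⁻¹ = z) ∨ (y⁻¹ = z ∧ z⁻¹ = y)) : False := by
  have hwS : w ∈ S := (hSchar w).mpr (Or.inl rfl)
  have hbS : b ∈ S := (hSchar b).mpr (Or.inr (Or.inl rfl))
  have hyS : y ∈ S := (hSchar y).mpr (Or.inr (Or.inr (Or.inl rfl)))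
  have hzS : z ∈ S := (hSchar z).mpr (Or.inr (Or.inr (Or.inr rfl)))
  have hw1 : w ≠ 1 := fun h => hS1 (h ▸ hwS)
  have hb1 : b ≠ 1 := fun h => hS1 (h ▸ hbS)
  have hy1 : y ≠ 1 := fun h => hS1 (h ▸ hyS)
  have hz1 : z ≠ 1 := fun h => hS1 (h ▸ hzS)
  have Count : ∀ v : G, pcInd D v + pcInd D (b*v) + pcInd D (y*v) + pcInd D (z*v)
      + pcInd D (w*v) = 1 := by
    intro v
    have hdom : ∀ d : G, (d = v ∨ (cayGraph S).Adj d v) ↔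
        d ∈ ({v, b*v, y*v, z*v, w*v} : Set G) := by
      intro d
      constructor
      · rintro (rfl | hadj)
        · exact Set.mem_insert _ _
        · simp only [cayGraph, SimpleGraph.fromRel_adj] at hadj
          obtain ⟨hne, hor⟩ := hadj
          have hS : d * v⁻¹ ∈ S := by
            rcases hor with h | h
            · have h2 := hSinv _ h
              rwa [mul_inv_rev, inv_inv] at h2
            · exact h
          rcases (hSchar _).mp hS with h | h | h | h
          · have hd : d = w * v := by rw [← h, inv_mul_cancel_right]
            simp [hd]
          · have hd : d = b * v := by rw [← h, inv_mul_cancel_right]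
            simp [hd]
          · have hd : d = y * v := by rw [← h, inv_mul_cancel_right]
            simp [hd]
          · have hd : d = z * v := by rw [← h, inv_mul_cancel_right]
            simp [hd]
      · intro hd
        simp only [Set.mem_insert_iff, Set.mem_singleton_iff] at hd
        rcases hd with rfl | rfl | rfl | rfl | rfl
        · exact Or.inl rfl
        · refine Or.inr ?_
          simp only [cayGraph, SimpleGraph.fromRel_adj]
          exact ⟨fun h => hb1 (mul_eq_right.mp h),
            Or.inr (by rw [mul_inv_cancel_right]; exact hbS)⟩
        · refine Or.inr ?_
          simp only [cayGraph, SimpleGraph.fromRel_adj]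
          exact ⟨fun h => hy1 (mul_eq_right.mp h),
            Or.inr (by rw [mul_inv_cancel_right]; exact hyS)⟩
        · refine Or.inr ?_
          simp only [cayGraph, SimpleGraph.fromRel_adj]
          exact ⟨fun h => hz1 (mul_eq_right.mp h),
            Or.inr (by rw [mul_inv_cancel_right]; exact hzS)⟩
        · refine Or.inr ?_
          simp only [cayGraph, SimpleGraph.fromRel_adj]
          exact ⟨fun h => hw1 (mul_eq_right.mp h),
            Or.inr (by rw [mul_inv_cancel_right]; exact hwS)⟩
    have h5 : ∃! d, d ∈ D ∧ d ∈ ({v, b*v, y*v, z*v, w*v} : Set G) := by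
      obtain ⟨d, ⟨hd1, hd2⟩, hu⟩ := hD v
      exact ⟨d, ⟨hd1, (hdom d).mp hd2⟩, fun x hx => hu x ⟨hx.1, (hdom x).mpr hx.2⟩⟩
    refine pc_five_helper D v (b*v) (y*v) (z*v) (w*v) ?_ ?_ ?_ ?_ ?_ ?_ ?_ ?_ ?_ ?_ h5
    · exact fun h => hb1 (mul_eq_right.mp h.symm)
    · exact fun h => hy1 (mul_eq_right.mp h.symm)
    · exact fun h => hz1 (mul_eq_right.mp h.symm)
    · exact fun h => hw1 (mul_eq_right.mp h.symm)
    · exact fun h => hby (mul_right_cancel h)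
    · exact fun h => hbz (mul_right_cancel h)
    · exact fun h => hbw (mul_right_cancel h)
    · exact fun h => hyz (mul_right_cancel h)
    · exact fun h => hyw (mul_right_cancel h)
    · exact fun h => hzw (mul_right_cancel h)
  have e1 : ∀ u : G, b*(b*u) = u := fun u => by rw [← mul_assoc, hbb, one_mul]
  have e2 : ∀ u : G, w*(w*u) = u := fun u => by rw [← mul_assoc, hww, one_mul]
  have e3 : ∀ u : G, y*(b*u) = b*(y*u) := fun u => by rw [← mul_assoc, hyb, mul_assoc]
  have e4 : ∀ u : G, z*(b*u) = b*(z*u) := fun u => by rw [← mul_assoc, hzb, mul_assoc]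
  have e5 : ∀ u : G, w*(b*u) = b*(w*u) := fun u => by rw [← mul_assoc, hwb, mul_assoc]
  have e6 : ∀ u : G, y*(w*u) = w*(y⁻¹*u) := fun u => by rw [← mul_assoc, hywc, mul_assoc]
  have e7 : ∀ u : G, z*(w*u) = w*(z⁻¹*u) := fun u => by rw [← mul_assoc, hzwc, mul_assoc]
  have CK : ∀ v : G,
      3 * (pcInd D v + pcInd D (b*v) + pcInd D (w*v) + pcInd D (b*(w*v)))
        + (pcInd D (y*v) + pcInd D (b*(y*v)) + pcInd D (w*(y*v)) + pcInd D (b*(w*(y*v))))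
        + (pcInd D (z*v) + pcInd D (b*(z*v)) + pcInd D (w*(z*v)) + pcInd D (b*(w*(z*v)))) = 4 := by
    intro v
    have h1 := Count v
    have h2 := Count (b*v)
    have h3 := Count (w*v)
    have h4 := Count (b*(w*v))
    rw [e1 v, e3 v, e4 v, e5 v] at h2
    rw [e6 v, e7 v, e2 v] at h3
    rw [e1 (w*v), e3 (w*v), e6 v, e4 (w*v), e7 v, e5 (w*v), e2 v] at h4
    rcases hQ with ⟨hy, hz⟩ | ⟨hy, hz⟩
    · rw [hy, hz] at h3 h4
      omega
    · rw [hy, hz] at h3 h4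
      omega
  have Kle : ∀ v : G, pcInd D v + pcInd D (b*v) + pcInd D (w*v) + pcInd D (b*(w*v)) ≤ 1 := by
    intro v
    have h := CK v
    omega
  have h0 := CK 1
  have hy0 := CK (y*1)
  have hz0 := CK (z*1)
  have k1 := Kle 1
  have k2 := Kle (y*1)
  have k3 := Kle (z*1)
  have k4 := Kle (y*(y*1))
  have k5 := Kle (z*(y*1))
  have k6 := Kle (y*(z*1))
  have k7 := Kle (z*(z*1))
  omega

theorem stmt_12 {G : Type*} [Group G] [Fintype G]
    (A : Subgroup G) (hA : ∀ a ∈ A, ∀ b ∈ A, a * b = b * a)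
    (t : G) (ht : t * t = 1) (htA : t ∉ A) (hidx : A.index = 2)
    (hconj : ∀ a ∈ A, t * a * t = a⁻¹)
    (S : Set G) (hSinv : ∀ s ∈ S, s⁻¹ ∈ S) (hS1 : (1 : G) ∉ S)
    (hScard : S.ncard = 4) (hSgen : Subgroup.closure S = ⊤)
    (hSAt : (S ∩ {g : G | ∃ a ∈ A, g = a * t}).ncard = 1) :
    ¬ ∃ D : Set G, IsPerfectCode (cayGraph S) D := by
  rintro ⟨D, hD⟩
  have htinv : t⁻¹ = t := inv_eq_of_mul_eq_one_right ht
  have hcoset : ∀ g : G, g ∉ A → ∃ a ∈ A, g = a * t := by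
    intro g hg
    obtain ⟨c, hc⟩ := Subgroup.index_eq_two_iff.mp hidx
    have h1 : t * c ∈ A := by
      rcases hc t with ⟨h, _⟩ | ⟨h, _⟩
      · exact h
      · exact absurd h htA
    have h2 : g * c ∈ A := by
      rcases hc g with ⟨h, _⟩ | ⟨h, _⟩
      · exact h
      · exact absurd h hg
    refine ⟨g * t, ?_, ?_⟩
    · have hmem : (g * c) * (t * c)⁻¹ ∈ A := A.mul_mem h2 (A.inv_mem h1)
      have heq : (g * c) * (t * c)⁻¹ = g * t⁻¹ := by group
      rw [heq, htinv] at hmem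
      exact hmem
    · rw [mul_assoc, ht, mul_one]
  obtain ⟨w, hw⟩ := Set.ncard_eq_one.mp hSAt
  have hwmem : w ∈ S ∩ {g : G | ∃ a ∈ A, g = a * t} := by
    rw [hw]; exact rfl
  obtain ⟨hwS, a0, ha0, hwa0⟩ := hwmem
  have hwA : w ∉ A := by
    intro h
    apply htA
    have hmem : a0⁻¹ * w ∈ A := A.mul_mem (A.inv_mem ha0) h
    rwa [hwa0, ← mul_assoc, inv_mul_cancel, one_mul] at hmem
  have hww : w * w = 1 := by
    rw [hwa0, mul_assoc, ← mul_assoc t a0 t, hconj a0 ha0, mul_inv_cancel]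
  have hwconj : ∀ a : G, a ∈ A → a * w = w * a⁻¹ := by
    intro a ha
    have h2 := hconj a⁻¹ (A.inv_mem ha)
    rw [inv_inv] at h2
    have h1 : t * a⁻¹ = a * t := by
      calc t * a⁻¹ = (t * a⁻¹ * t) * t⁻¹ := by group
        _ = a * t := by rw [h2, htinv]
    rw [hwa0]
    calc a * (a0 * t) = (a * a0) * t := (mul_assoc a a0 t).symm
      _ = (a0 * a) * t := by rw [hA a ha a0 ha0]
      _ = a0 * (a * t) := mul_assoc a0 a t
      _ = a0 * (t * a⁻¹) := by rw [h1]
      _ = (a0 * t) * a⁻¹ := (mul_assoc a0 t a⁻¹).symm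
  have hmemA : ∀ x, x ∈ S → x ≠ w → x ∈ A := by
    intro x hxS hxw
    by_contra hxA
    obtain ⟨a, ha, rfl⟩ := hcoset x hxA
    apply hxw
    have hx : (a*t) ∈ S ∩ {g : G | ∃ a ∈ A, g = a * t} := ⟨hxS, a, ha, rfl⟩
    rw [hw] at hx
    exact hx
  have hT3 : (S \ {w}).ncard = 3 := by
    rw [Set.ncard_diff_singleton_of_mem hwS, hScard]
  obtain ⟨x₁, x₂, x₃, h12, h13, h23, hTeq⟩ := Set.ncard_eq_three.mp hT3
  have hx1 : x₁ ∈ S \ {w} := by rw [hTeq]; simp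
  have hx2 : x₂ ∈ S \ {w} := by rw [hTeq]; simp
  have hx3 : x₃ ∈ S \ {w} := by rw [hTeq]; simp
  obtain ⟨hx1S, hx1w⟩ := hx1
  obtain ⟨hx2S, hx2w⟩ := hx2
  obtain ⟨hx3S, hx3w⟩ := hx3
  simp only [Set.mem_singleton_iff] at hx1w hx2w hx3w
  have hx1A : x₁ ∈ A := hmemA x₁ hx1S hx1w
  have hx2A : x₂ ∈ A := hmemA x₂ hx2S hx2w
  have hx3A : x₃ ∈ A := hmemA x₃ hx3S hx3w
  have hSchar : ∀ x : G, x ∈ S ↔ (x = w ∨ x = x₁ ∨ x = x₂ ∨ x = x₃) := by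
    intro x
    constructor
    · intro hxS
      by_cases hxw : x = w
      · exact Or.inl hxw
      · have hx : x ∈ S \ {w} := ⟨hxS, hxw⟩
        rw [hTeq] at hx
        simp only [Set.mem_insert_iff, Set.mem_singleton_iff] at hx
        exact Or.inr hx
    · rintro (rfl | rfl | rfl | rfl)
      exacts [hwS, hx1S, hx2S, hx3S]
  have hinv : ∀ u : G, u ∈ S → u ∈ A → (u⁻¹ = x₁ ∨ u⁻¹ = x₂ ∨ u⁻¹ = x₃) := by
    intro u huS huA
    have h1 : u⁻¹ ∈ S := hSinv u huS
    have h2 : u⁻¹ ≠ w := fun h => hwA (h ▸ A.inv_mem huA)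
    rcases (hSchar u⁻¹).mp h1 with h | h | h | h
    · exact absurd h h2
    · exact Or.inl h
    · exact Or.inr (Or.inl h)
    · exact Or.inr (Or.inr h)
  have invinv : ∀ u v : G, u⁻¹ = v → v⁻¹ = u := fun u v h => by rw [← h, inv_inv]
  have mulself : ∀ u : G, u⁻¹ = u → u * u = 1 := fun u h =>
    mul_eq_one_iff_eq_inv.mpr h.symm
  have key : ∀ b y z : G, b ∈ A → y ∈ A → z ∈ A →
      (∀ x : G, x ∈ S ↔ (x = w ∨ x = b ∨ x = y ∨ x = z)) →
      b ≠ y → b ≠ z → y ≠ z → b * b = 1 →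
      ((y⁻¹ = y ∧ z⁻¹ = z) ∨ (y⁻¹ = z ∧ z⁻¹ = y)) → False := by
    intro b y z hbA hyA hzA hchar hby hbz hyz hbb hQ
    have hbinv : b⁻¹ = b := inv_eq_of_mul_eq_one_right hbb
    have hwb : w * b = b * w := by
      have h := hwconj b hbA
      rw [hbinv] at h
      exact h.symm
    exact pc_aux S D hD hSinv hS1 w b y z hchar hby hbz hyz
      (fun h => hwA (h ▸ hbA)) (fun h => hwA (h ▸ hyA)) (fun h => hwA (h ▸ hzA))
      hww hbb (hA y hyA b hbA) (hA z hzA b hbA) hwb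
      (hwconj y hyA) (hwconj z hzA) hQ
  rcases hinv x₁ hx1S hx1A with h1 | h1 | h1
  · rcases hinv x₂ hx2S hx2A with h2 | h2 | h2
    · exact h12 (invinv _ _ h2 ▸ h1).symm
    · rcases hinv x₃ hx3S hx3A with h3 | h3 | h3
      · exact h13 ((invinv _ _ h3).symm.trans h1).symm
      · exact h23 ((invinv _ _ h3).symm.trans h2).symm
      · exact key x₁ x₂ x₃ hx1A hx2A hx3A hSchar h12 h13 h23 (mulself _ h1)
          (Or.inl ⟨h2, h3⟩)
    · have h2' : x₃⁻¹ = x₂ := invinv _ _ h2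
      exact key x₁ x₂ x₃ hx1A hx2A hx3A hSchar h12 h13 h23 (mulself _ h1)
        (Or.inr ⟨h2, h2'⟩)
  · have h1' : x₂⁻¹ = x₁ := invinv _ _ h1
    rcases hinv x₃ hx3S hx3A with h3 | h3 | h3
    · exact h23 ((invinv _ _ h3).symm.trans h1).symm
    · exact h13 ((invinv _ _ h3).symm.trans h1').symm
    · refine key x₃ x₁ x₂ hx3A hx1A hx2A ?_ h13.symm h23.symm h12 (mulself _ h3)
        (Or.inr ⟨h1, h1'⟩)
      intro x
      rw [hSchar x]
      tauto
  · have h1' : x₃⁻¹ = x₁ := invinv _ _ h1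
    rcases hinv x₂ hx2S hx2A with h2 | h2 | h2
    · exact h23 ((invinv _ _ h2).symm.trans h1)
    · refine key x₂ x₁ x₃ hx2A hx1A hx3A ?_ h12.symm h23 h13 (mulself _ h2)
        (Or.inr ⟨h1, h1'⟩)
      intro x
      rw [hSchar x]
      tauto
    · exact h12 ((invinv _ _ h2).symm.trans h1').symm
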